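/- For ε > 0 define h_ε(s) := ∫_0^ε (α/(α² + ε⁴))·sin(αs) dα for s ≥ 0. Then |h_ε(s)| ≤ 4 for all s ≥ 0 and all ε ∈ (0,1). -/

import Mathlib

open MeasureTheory intervalIntegral

set_option maxHeartbeats 2000000 in
theorem stmt13 (ε : ℝ) (hε0 : 0 < ε) (hε1 : ε < 1) (s : ℝ) (hs : 0 ≤ s) :
    |∫ α in (0:ℝ)..ε, (α / (α ^ 2 + ε ^ 4)) * Real.sin (α * s)| ≤ 4 := by
  have hd : ∀ α : ℝ, 0 < α ^ 2 + ε ^ 4 := fun α => by positivity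
  have hfc : Continuous fun α : ℝ => (α / (α ^ 2 + ε ^ 4)) * Real.sin (α * s) := by
    exact ((continuous_id.div (by continuity) (fun α => (hd α).ne')).mul
      (Real.continuous_sin.comp (continuous_id.mul continuous_const)))
  have sinb : ∀ x : ℝ, 0 ≤ x → |Real.sin (x * s)| ≤ x * s := by
    intro x hx
    calc |Real.sin (x * s)| ≤ |x * s| := Real.abs_sin_le_abs
      _ = x * s := abs_of_nonneg (mul_nonneg hx hs)
  have ptb : ∀ x : ℝ, 0 ≤ x → x / (x ^ 2 + ε ^ 4) * |Real.sin (x * s)| ≤ s := by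
    intro x hx
    calc x / (x ^ 2 + ε ^ 4) * |Real.sin (x * s)|
        ≤ x / (x ^ 2 + ε ^ 4) * (x * s) :=
          mul_le_mul_of_nonneg_left (sinb x hx) (by positivity)
      _ = x ^ 2 * s / (x ^ 2 + ε ^ 4) := by ring
      _ ≤ s := by
          rw [div_le_iff₀ (hd x)]
          nlinarith [sq_nonneg x, pow_pos hε0 4]
  by_cases hcase : ε * s ≤ 2
  · -- easy case
    have key : ∀ x ∈ Set.uIoc (0:ℝ) ε,
        ‖(x / (x ^ 2 + ε ^ 4)) * Real.sin (x * s)‖ ≤ s := by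
      intro x hx
      rw [Set.uIoc_of_le hε0.le] at hx
      rw [Real.norm_eq_abs, abs_mul,
        abs_of_nonneg (show (0:ℝ) ≤ x / (x ^ 2 + ε ^ 4) by
          have := hx.1.le; positivity)]
      exact ptb x hx.1.le
    have := intervalIntegral.norm_integral_le_of_norm_le_const key
    rw [Real.norm_eq_abs] at this
    calc |∫ α in (0:ℝ)..ε, (α / (α ^ 2 + ε ^ 4)) * Real.sin (α * s)|
        ≤ s * |ε - 0| := this
      _ = s * ε := by rw [sub_zero, abs_of_nonneg hε0.le]
      _ ≤ 2 := by nlinarith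
      _ ≤ 4 := by norm_num
  · -- hard case: ε * s > 2
    push_neg at hcase
    have hs0 : 0 < s := by nlinarith
    set a : ℝ := Real.pi / (2 * s) with ha
    have hpi : (3:ℝ) < Real.pi := Real.pi_gt_three
    have hpi' : Real.pi < 3.15 := by linarith [Real.pi_lt_d2]
    have ha0 : 0 < a := by positivity
    have haε : a < ε := by
      rw [ha, div_lt_iff₀ (by positivity)]
      nlinarith
    have hint : ∀ p q : ℝ, IntervalIntegrable
        (fun α : ℝ => (α / (α ^ 2 + ε ^ 4)) * Real.sin (α * s)) volume p q :=
      fun p q => hfc.intervalIntegrable p q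
    have hsplit : (∫ α in (0:ℝ)..ε, (α / (α ^ 2 + ε ^ 4)) * Real.sin (α * s))
        = (∫ α in (0:ℝ)..a, (α / (α ^ 2 + ε ^ 4)) * Real.sin (α * s))
        + (∫ α in a..ε, (α / (α ^ 2 + ε ^ 4)) * Real.sin (α * s)) :=
      (intervalIntegral.integral_add_adjacent_intervals (hint 0 a) (hint a ε)).symm
    -- bound on [0, a]
    have bound1 : |∫ α in (0:ℝ)..a, (α / (α ^ 2 + ε ^ 4)) * Real.sin (α * s)|
        ≤ Real.pi / 2 := by
      have key : ∀ x ∈ Set.uIoc (0:ℝ) a,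
          ‖(x / (x ^ 2 + ε ^ 4)) * Real.sin (x * s)‖ ≤ s := by
        intro x hx
        rw [Set.uIoc_of_le ha0.le] at hx
        rw [Real.norm_eq_abs, abs_mul,
          abs_of_nonneg (show (0:ℝ) ≤ x / (x ^ 2 + ε ^ 4) by
            have := hx.1.le; positivity)]
        exact ptb x hx.1.le
      have := intervalIntegral.norm_integral_le_of_norm_le_const key
      rw [Real.norm_eq_abs] at this
      calc |∫ α in (0:ℝ)..a, (α / (α ^ 2 + ε ^ 4)) * Real.sin (α * s)|
          ≤ s * |a - 0| := this
        _ = s * a := by rw [sub_zero, abs_of_nonneg ha0.le]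
        _ = Real.pi / 2 := by rw [ha]; field_simp
    -- integration by parts on [a, ε]
    have hu'c : Continuous fun α : ℝ => (ε ^ 4 - α ^ 2) / (α ^ 2 + ε ^ 4) ^ 2 :=
      Continuous.div (by continuity) (by continuity)
        (fun x => (pow_pos (hd x) 2).ne')
    have hibp : (∫ α in a..ε, (α / (α ^ 2 + ε ^ 4)) * Real.sin (α * s))
        = (ε / (ε ^ 2 + ε ^ 4)) * (-(Real.cos (ε * s)) / s)
          - (a / (a ^ 2 + ε ^ 4)) * (-(Real.cos (a * s)) / s)
          - ∫ α in a..ε, ((ε ^ 4 - α ^ 2) / (α ^ 2 + ε ^ 4) ^ 2)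
              * (-(Real.cos (α * s)) / s) := by
      apply intervalIntegral.integral_mul_deriv_eq_deriv_mul
      · intro x hx
        have h1 : HasDerivAt (fun α : ℝ => α / (α ^ 2 + ε ^ 4))
            ((1 * (x ^ 2 + ε ^ 4) - x * (2 * x ^ 1)) / (x ^ 2 + ε ^ 4) ^ 2) x :=
          (hasDerivAt_id x).div ((hasDerivAt_pow 2 x).add_const (ε ^ 4)) (hd x).ne'
        refine h1.congr_deriv ?_
        ring
      · intro x hx
        have h1 : HasDerivAt (fun α : ℝ => Real.cos (α * s))
            (-Real.sin (x * s) * s) x :=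
          by have h := (Real.hasDerivAt_cos (x * s)).comp x
                 (hasDerivAt_mul_const s : HasDerivAt (fun y : ℝ => y * s) s x)
             exact h
        have h2 := (h1.neg).div_const s
        refine h2.congr_deriv ?_
        rw [neg_mul, neg_neg, mul_div_assoc, div_self hs0.ne', mul_one]
      · exact hu'c.intervalIntegrable a ε
      · exact ((Real.continuous_sin.comp
          (continuous_id.mul continuous_const)).intervalIntegrable a ε)
    -- bound the boundary terms
    have hbt : ∀ t : ℝ, 0 < t →
        |(t / (t ^ 2 + ε ^ 4)) * (-(Real.cos (t * s)) / s)| ≤ 1 / (t * s) := by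
      intro t ht
      rw [abs_mul]
      have h1 : |t / (t ^ 2 + ε ^ 4)| ≤ 1 / t := by
        rw [abs_of_nonneg (by positivity), div_le_div_iff₀ (hd t) ht]
        nlinarith [pow_pos hε0 4]
      have h2 : |(-(Real.cos (t * s)) / s)| ≤ 1 / s := by
        rw [abs_div, abs_neg, abs_of_pos hs0]
        gcongr
        · exact Real.abs_cos_le_one _
      calc |t / (t ^ 2 + ε ^ 4)| * |(-(Real.cos (t * s)) / s)|
          ≤ (1 / t) * (1 / s) := by
            exact mul_le_mul h1 h2 (abs_nonneg _) (by positivity)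
        _ = 1 / (t * s) := by field_simp
    have hb1 : |(ε / (ε ^ 2 + ε ^ 4)) * (-(Real.cos (ε * s)) / s)| ≤ 1 / 2 := by
      refine (hbt ε hε0).trans ?_
      rw [div_le_div_iff₀ (by positivity) (by norm_num)]
      nlinarith
    have hb2 : |(a / (a ^ 2 + ε ^ 4)) * (-(Real.cos (a * s)) / s)| ≤ 2 / 3 := by
      refine (hbt a ha0).trans ?_
      have : a * s = Real.pi / 2 := by rw [ha]; field_simp
      rw [this]
      rw [div_le_div_iff₀ (by positivity) (by norm_num)]
      linarith
    -- bound the remaining integral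
    have hvc : Continuous fun α : ℝ => -(Real.cos (α * s)) / s := by
      exact ((Real.continuous_cos.comp (continuous_id.mul continuous_const)).neg).div_const s
    have hia : ∫ x in a..ε, (x ^ 2)⁻¹ = a⁻¹ - ε⁻¹ := by
      have hpos : ∀ x ∈ Set.uIcc a ε, 0 < x := by
        intro x hx
        rw [Set.uIcc_of_le haε.le] at hx
        exact lt_of_lt_of_le ha0 hx.1
      have := intervalIntegral.integral_eq_sub_of_hasDerivAt
        (f := fun x : ℝ => -(x⁻¹)) (f' := fun x : ℝ => (x ^ 2)⁻¹)
        (fun x hx => (hasDerivAt_inv (hpos x hx).ne').neg.congr_deriv (by ring))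
        ?_
      · rw [this]; ring
      · apply ContinuousOn.intervalIntegrable
        exact ContinuousOn.inv₀ (by fun_prop) (fun x hx => (pow_pos (hpos x hx) 2).ne')
    have hIbound : |∫ α in a..ε, ((ε ^ 4 - α ^ 2) / (α ^ 2 + ε ^ 4) ^ 2)
        * (-(Real.cos (α * s)) / s)| ≤ 2 / 3 := by
      have step1 := intervalIntegral.abs_integral_le_integral_abs
        (f := fun α : ℝ => ((ε ^ 4 - α ^ 2) / (α ^ 2 + ε ^ 4) ^ 2)
          * (-(Real.cos (α * s)) / s)) (μ := volume) haε.le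
      have step2 : (∫ α in a..ε, |((ε ^ 4 - α ^ 2) / (α ^ 2 + ε ^ 4) ^ 2)
          * (-(Real.cos (α * s)) / s)|)
          ≤ ∫ α in a..ε, (1 / s) * (α ^ 2)⁻¹ := by
        apply intervalIntegral.integral_mono_on haε.le
        · exact ((hu'c.mul hvc).abs).intervalIntegrable a ε
        · apply ContinuousOn.intervalIntegrable
          rw [Set.uIcc_of_le haε.le]
          apply ContinuousOn.mul continuousOn_const
          exact ContinuousOn.inv₀ (by fun_prop)
            (fun x hx => (pow_pos (lt_of_lt_of_le ha0 hx.1) 2).ne')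
        · intro x hx
          obtain ⟨hx1, hx2⟩ := hx
          have hx0 : 0 < x := lt_of_lt_of_le ha0 hx1
          rw [abs_mul]
          have h1 : |(ε ^ 4 - x ^ 2) / (x ^ 2 + ε ^ 4) ^ 2| ≤ (x ^ 2)⁻¹ := by
            rw [abs_div, abs_of_nonneg (by positivity : (0:ℝ) ≤ (x ^ 2 + ε ^ 4) ^ 2)]
            have hnum : |ε ^ 4 - x ^ 2| ≤ x ^ 2 + ε ^ 4 := by
              rw [abs_sub_le_iff]
              constructor <;> nlinarith [sq_nonneg x, pow_pos hε0 4]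
            rw [div_le_iff₀ (pow_pos (hd x) 2), inv_mul_eq_div,
              le_div_iff₀ (by positivity : (0:ℝ) < x ^ 2)]
            nlinarith [mul_le_mul_of_nonneg_right hnum (sq_nonneg x),
              mul_le_mul_of_nonneg_left
                (show x ^ 2 ≤ x ^ 2 + ε ^ 4 by nlinarith [pow_pos hε0 4]) (hd x).le]
          have h2 : |(-(Real.cos (x * s)) / s)| ≤ 1 / s := by
            rw [abs_div, abs_neg, abs_of_pos hs0]
            gcongr
            exact Real.abs_cos_le_one _
          calc |(ε ^ 4 - x ^ 2) / (x ^ 2 + ε ^ 4) ^ 2| * |(-(Real.cos (x * s)) / s)|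
              ≤ (x ^ 2)⁻¹ * (1 / s) := mul_le_mul h1 h2 (abs_nonneg _) (by positivity)
            _ = (1 / s) * (x ^ 2)⁻¹ := by ring
      have step3 : (∫ α in a..ε, (1 / s) * (α ^ 2)⁻¹) = (1 / s) * (a⁻¹ - ε⁻¹) := by
        rw [intervalIntegral.integral_const_mul, hia]
      have step4 : (1 / s) * (a⁻¹ - ε⁻¹) ≤ 2 / 3 := by
        have hainv : a⁻¹ = 2 * s / Real.pi := by
          rw [ha]; field_simp
        rw [hainv]
        have hεinv : 0 < ε⁻¹ := by positivity
        calc (1 / s) * (2 * s / Real.pi - ε⁻¹) ≤ (1 / s) * (2 * s / Real.pi) := by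
              apply mul_le_mul_of_nonneg_left _ (by positivity)
              linarith
          _ = 2 / Real.pi := by field_simp
          _ ≤ 2 / 3 := by
              rw [div_le_div_iff₀ Real.pi_pos (by norm_num)]
              nlinarith
      linarith [step1, step2]
    -- combine
    have hmain : |∫ α in a..ε, (α / (α ^ 2 + ε ^ 4)) * Real.sin (α * s)|
        ≤ 1 / 2 + 2 / 3 + 2 / 3 := by
      rw [hibp]
      calc |(ε / (ε ^ 2 + ε ^ 4)) * (-(Real.cos (ε * s)) / s)
            - (a / (a ^ 2 + ε ^ 4)) * (-(Real.cos (a * s)) / s)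
            - ∫ α in a..ε, ((ε ^ 4 - α ^ 2) / (α ^ 2 + ε ^ 4) ^ 2)
                * (-(Real.cos (α * s)) / s)|
          ≤ |(ε / (ε ^ 2 + ε ^ 4)) * (-(Real.cos (ε * s)) / s)
            - (a / (a ^ 2 + ε ^ 4)) * (-(Real.cos (a * s)) / s)|
            + |∫ α in a..ε, ((ε ^ 4 - α ^ 2) / (α ^ 2 + ε ^ 4) ^ 2)
                * (-(Real.cos (α * s)) / s)| := abs_sub _ _
        _ ≤ (|(ε / (ε ^ 2 + ε ^ 4)) * (-(Real.cos (ε * s)) / s)|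
            + |(a / (a ^ 2 + ε ^ 4)) * (-(Real.cos (a * s)) / s)|)
            + |∫ α in a..ε, ((ε ^ 4 - α ^ 2) / (α ^ 2 + ε ^ 4) ^ 2)
                * (-(Real.cos (α * s)) / s)| := by
              gcongr
              exact abs_sub _ _
        _ ≤ 1 / 2 + 2 / 3 + 2 / 3 := by linarith
    rw [hsplit]
    calc |(∫ α in (0:ℝ)..a, (α / (α ^ 2 + ε ^ 4)) * Real.sin (α * s))
          + ∫ α in a..ε, (α / (α ^ 2 + ε ^ 4)) * Real.sin (α * s)|
        ≤ |∫ α in (0:ℝ)..a, (α / (α ^ 2 + ε ^ 4)) * Real.sin (α * s)|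
          + |∫ α in a..ε, (α / (α ^ 2 + ε ^ 4)) * Real.sin (α * s)| := abs_add_le _ _
      _ ≤ Real.pi / 2 + (1 / 2 + 2 / 3 + 2 / 3) := by linarith
      _ ≤ 4 := by nlinarith
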